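/- Assume (KV). Then there exist constants C > 0 and t₁ ≥ t₀ such that for every real t ≥ t₁, |∫_1^2 (ζ′(σ+it)/ζ(σ+it)) dσ| ≤ (2/3)·log log t + C·log log log t. (The imaginary part of this integral is the change of the continuous argument of ζ along the horizontal segment from 1+it to 2+it, so the continuous argument of ζ(1+it) is bounded by (2/3)·log log t + O(log log log t) up to the bounded quantity arg ζ(2+it).) -/

import Mathlib

open Complex Real

open LSeries


/-- The value of ζ at a real point σ>1 is a real number in [1, σ/(σ-1)]. -/
lemma zeta_ofReal_bounds {σ : ℝ} (hσ : 1 < σ) :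
    ∃ Z : ℝ, riemannZeta (σ : ℂ) = (Z : ℂ) ∧ 1 ≤ Z ∧ Z ≤ σ / (σ - 1) := by
  have hσ0 : (0:ℝ) < σ - 1 := by linarith
  have hsum : Summable (fun n : ℕ => 1 / ((n : ℝ) + 1) ^ σ) := by
    exact_mod_cast (summable_nat_add_iff 1).mpr (Real.summable_one_div_nat_rpow.mpr hσ)
  refine ⟨∑' n : ℕ, 1 / ((n : ℝ) + 1) ^ σ, ?_, ?_, ?_⟩
  · have hre : 1 < (σ : ℂ).re := by simpa using hσ
    rw [zeta_eq_tsum_one_div_nat_cpow hre]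
    have hterm : ∀ n : ℕ, (1 : ℂ) / (n : ℂ) ^ (σ : ℂ) = ((1 / (n : ℝ) ^ σ : ℝ) : ℂ) := by
      intro n
      rcases Nat.eq_zero_or_pos n with rfl | hn
      · rw [Nat.cast_zero, Nat.cast_zero, Complex.zero_cpow (by exact_mod_cast ne_of_gt (by linarith : (0:ℝ) < σ)), Real.zero_rpow (ne_of_gt (by linarith))]
        simp
      · rw [← Complex.ofReal_natCast, ← Complex.ofReal_cpow (Nat.cast_nonneg n)]
        push_cast
        ring
    rw [tsum_congr hterm, ← Complex.ofReal_tsum]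
    norm_cast
    rw [Summable.tsum_eq_zero_add (Real.summable_one_div_nat_rpow.mpr hσ)]
    push_cast
    rw [Real.zero_rpow (ne_of_gt (by linarith))]
    simp
  · have h0 : (1:ℝ) = 1 / ((0:ℕ) + 1 : ℝ) ^ σ := by norm_num
    calc (1:ℝ) = 1 / (((0:ℕ) : ℝ) + 1) ^ σ := by norm_num
    _ ≤ ∑' n : ℕ, 1 / ((n : ℝ) + 1) ^ σ :=
        Summable.le_tsum hsum 0 (fun i _ => by positivity)
  · have hterm := ZetaAsymptotics.term_tsum_of_lt hσ
    have hnn : 0 ≤ ZetaAsymptotics.termTSum σ :=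
      tsum_nonneg fun n => ZetaAsymptotics.term_nonneg _ _
    rw [hterm] at hnn
    have hZ : (0:ℝ) ≤ ∑' n : ℕ, 1 / ((n:ℝ) + 1) ^ σ := tsum_nonneg fun i => by positivity
    have : (1:ℝ)/σ * ∑' n : ℕ, 1 / ((n:ℝ) + 1) ^ σ ≤ 1 / (σ - 1) := by
      have : ∑' (n : ℕ), 1 / ((n:ℝ) + 1) ^ σ = ∑' (n : ℕ), 1 / ((n:ℕ) + 1 : ℝ) ^ σ := by
        push_cast; rfl
      linarith [hnn]
    rw [div_eq_mul_inv σ]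
    calc ∑' n : ℕ, 1 / ((n:ℝ) + 1) ^ σ = σ * ((1/σ) * ∑' n : ℕ, 1 / ((n:ℝ) + 1) ^ σ) := by
          field_simp
    _ ≤ σ * (1/(σ-1)) := by
          apply mul_le_mul_of_nonneg_left this (by linarith)
    _ = σ * (σ-1)⁻¹ := by rw [one_div]


local notation "Λ" => ArithmeticFunction.vonMangoldt

/-- At a real point x>1, ζ'/ζ(x) = -(nonneg real), whose norm is the tsum of term norms. -/
lemma logDeriv_zeta_ofReal {x : ℝ} (hx : 1 < x) :
    deriv riemannZeta (x : ℂ) / riemannZeta (x : ℂ)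
      = -(((∑' n : ℕ, ‖term (fun n => ((Λ n : ℝ) : ℂ)) (x : ℂ) n‖ : ℝ)) : ℂ) := by
  have hre : 1 < (x : ℂ).re := by simpa using hx
  have h := ArithmeticFunction.LSeries_vonMangoldt_eq_deriv_riemannZeta_div hre
  have hterm : ∀ n : ℕ, term (fun n => ((Λ n : ℝ) : ℂ)) (x : ℂ) n
      = ((‖term (fun n => ((Λ n : ℝ) : ℂ)) (x : ℂ) n‖ : ℝ) : ℂ) := by
    intro n
    rcases eq_or_ne n 0 with rfl | hn
    · simp [term_zero]
    · rw [term_of_ne_zero hn]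
      have hz : ((Λ n : ℝ) : ℂ) / (n : ℂ) ^ (x : ℂ)
          = (((Λ n : ℝ) / (n : ℝ) ^ x : ℝ) : ℂ) := by
        rw [← Complex.ofReal_natCast, ← Complex.ofReal_cpow (Nat.cast_nonneg n),
          ← Complex.ofReal_div]
      rw [hz, Complex.norm_real, Real.norm_eq_abs, _root_.abs_of_nonneg
        (div_nonneg ArithmeticFunction.vonMangoldt_nonneg (Real.rpow_nonneg (Nat.cast_nonneg n) x))]
  have hL : LSeries (fun n => ((Λ n : ℝ) : ℂ)) (x : ℂ)
      = ((∑' n : ℕ, ‖term (fun n => ((Λ n : ℝ) : ℂ)) (x : ℂ) n‖ : ℝ) : ℂ) := by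
    rw [LSeries, tsum_congr hterm, ← Complex.ofReal_tsum]
  rw [← hL]
  have h' : LSeries (fun n => ((Λ n : ℝ) : ℂ)) (x:ℂ) = -deriv riemannZeta x / riemannZeta x := h
  rw [h', neg_div, neg_neg]

/-- Pointwise comparison: the norm of ζ'/ζ on the line Re = x is at most its value at x. -/
lemma logDeriv_zeta_norm_le {x t : ℝ} (hx : 1 < x) :
    ‖deriv riemannZeta (x + t * Complex.I) / riemannZeta (x + t * Complex.I)‖
      ≤ ‖deriv riemannZeta (x : ℂ) / riemannZeta (x : ℂ)‖ := by
  have hre : 1 < ((x : ℂ) + t * Complex.I).re := by simp [hx]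
  have h := ArithmeticFunction.LSeries_vonMangoldt_eq_deriv_riemannZeta_div hre
  have h2 : deriv riemannZeta ((x:ℂ) + t * Complex.I) / riemannZeta ((x:ℂ) + t * Complex.I)
      = -LSeries (fun n => ((Λ n : ℝ) : ℂ)) ((x:ℂ) + t * Complex.I) := by
    rw [h, neg_div, neg_neg]
  rw [h2, norm_neg]
  have hsum : Summable fun n => ‖term (fun n => ((Λ n : ℝ) : ℂ)) ((x:ℂ) + t * Complex.I) n‖ :=
    summable_norm_iff.mpr (ArithmeticFunction.LSeriesSummable_vonMangoldt hre)
  calc ‖LSeries (fun n => ((Λ n : ℝ) : ℂ)) ((x:ℂ) + t * Complex.I)‖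
      ≤ ∑' n : ℕ, ‖term (fun n => ((Λ n : ℝ) : ℂ)) ((x:ℂ) + t * Complex.I) n‖ :=
        norm_tsum_le_tsum_norm hsum
    _ = ∑' n : ℕ, ‖term (fun n => ((Λ n : ℝ) : ℂ)) (x : ℂ) n‖ := by
        refine tsum_congr fun n => ?_
        rw [norm_term_eq, norm_term_eq]
        simp
    _ ≤ ‖deriv riemannZeta (x : ℂ) / riemannZeta (x : ℂ)‖ := by
        rw [logDeriv_zeta_ofReal hx, norm_neg, Complex.norm_real]
        exact le_abs_self _

lemma analyticAt_deriv_zeta {z : ℂ} (hz : z ≠ 1) : AnalyticAt ℂ (deriv riemannZeta) z := by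
  have hA : AnalyticOnNhd ℂ riemannZeta {s : ℂ | s ≠ 1} := fun w hw =>
    DifferentiableOn.analyticAt
      (fun u hu => (differentiableAt_riemannZeta hu).differentiableWithinAt)
      (IsOpen.mem_nhds isOpen_ne hw)
  exact hA.deriv z hz

lemma zeta_ofReal_ne_zero {x : ℝ} (hx : 1 < x) : riemannZeta (x : ℂ) ≠ 0 := by
  obtain ⟨Z, hZ, hZ1, -⟩ := zeta_ofReal_bounds hx
  rw [hZ]
  exact_mod_cast ne_of_gt (by exact_mod_cast lt_of_lt_of_le zero_lt_one hZ1 : (0:ℝ) < Z)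

lemma continuousOn_logDeriv_zeta_real {s₁ : ℝ} (h1 : 1 < s₁) (h2 : s₁ ≤ 2) :
    ContinuousOn (fun x : ℝ => deriv riemannZeta (x : ℂ) / riemannZeta (x : ℂ))
      (Set.uIcc s₁ 2) := by
  intro x hx
  rw [Set.uIcc_of_le h2] at hx
  have hx1 : 1 < x := lt_of_lt_of_le h1 hx.1
  have hne : (x : ℂ) ≠ 1 := by
    intro h; exact absurd (Complex.ofReal_inj.mp (by simpa using h)) (by linarith)
  apply ContinuousAt.continuousWithinAt
  exact ContinuousAt.div
    ((analyticAt_deriv_zeta hne).continuousAt.comp Complex.continuous_ofReal.continuousAt)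
    ((differentiableAt_riemannZeta hne).continuousAt.comp Complex.continuous_ofReal.continuousAt)
    (zeta_ofReal_ne_zero hx1)

lemma integral_logDeriv_zeta_real {s₁ : ℝ} (h1 : 1 < s₁) (h2 : s₁ ≤ 2) :
    ∫ x in s₁..2, deriv riemannZeta (x : ℂ) / riemannZeta (x : ℂ)
      = Complex.log (riemannZeta ((2:ℝ) : ℂ)) - Complex.log (riemannZeta ((s₁:ℝ) : ℂ)) := by
  refine intervalIntegral.integral_eq_sub_of_hasDerivAt
    (f := fun x : ℝ => Complex.log (riemannZeta ((x : ℝ) : ℂ))) ?_ ?_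
  · intro x hx
    rw [Set.uIcc_of_le h2] at hx
    have hx1 : 1 < x := lt_of_lt_of_le h1 hx.1
    have hne : (x : ℂ) ≠ 1 := by
      intro h; exact absurd (Complex.ofReal_inj.mp (by simpa using h)) (by linarith)
    obtain ⟨Z, hZ, hZ1, -⟩ := zeta_ofReal_bounds hx1
    have hslit : riemannZeta (x : ℂ) ∈ Complex.slitPlane := by
      rw [hZ]; exact Or.inl (by simpa using (by linarith : (0:ℝ) < Z))
    have hζ : HasDerivAt riemannZeta (deriv riemannZeta (x:ℂ)) (x:ℂ) :=
      (differentiableAt_riemannZeta hne).hasDerivAt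
    have hlog : HasDerivAt Complex.log (riemannZeta (x:ℂ))⁻¹ (riemannZeta (x:ℂ)) :=
      Complex.hasDerivAt_log hslit
    have := (hlog.comp (x:ℂ) hζ).comp_ofReal
    rw [div_eq_mul_inv, mul_comm]; exact this
  · exact (continuousOn_logDeriv_zeta_real h1 h2).intervalIntegrable

lemma integral_majorant_le {s₁ : ℝ} (h1 : 1 < s₁) (h2 : s₁ ≤ 2) :
    ∫ x in s₁..2, ‖deriv riemannZeta (x : ℂ) / riemannZeta (x : ℂ)‖
      ≤ Real.log (s₁ / (s₁ - 1)) := by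
  obtain ⟨Z1, hZ1, hZ11, hZ1le⟩ := zeta_ofReal_bounds h1
  obtain ⟨Z2, hZ2, hZ21, -⟩ := zeta_ofReal_bounds (by norm_num : (1:ℝ) < 2)
  have key : ∀ x ∈ Set.uIcc s₁ 2,
      ((‖deriv riemannZeta (x:ℂ) / riemannZeta (x:ℂ)‖ : ℝ) : ℂ)
        = -(deriv riemannZeta (x:ℂ) / riemannZeta (x:ℂ)) := by
    intro x hx
    rw [Set.uIcc_of_le h2] at hx
    have hx1 : 1 < x := lt_of_lt_of_le h1 hx.1
    rw [logDeriv_zeta_ofReal hx1, neg_neg, norm_neg, Complex.norm_real,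
      Real.norm_eq_abs, _root_.abs_of_nonneg (tsum_nonneg fun n => norm_nonneg _)]
  have hI : ((∫ x in s₁..2, ‖deriv riemannZeta (x:ℂ) / riemannZeta (x:ℂ)‖ : ℝ) : ℂ)
      = ((Real.log Z1 - Real.log Z2 : ℝ) : ℂ) := by
    rw [← intervalIntegral.integral_ofReal]
    rw [intervalIntegral.integral_congr key]
    rw [intervalIntegral.integral_neg, integral_logDeriv_zeta_real h1 h2]
    rw [hZ1, hZ2, ← Complex.ofReal_log (by linarith : (0:ℝ) ≤ Z1),
      ← Complex.ofReal_log (by linarith : (0:ℝ) ≤ Z2)]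
    push_cast
    ring
  have hI' := Complex.ofReal_inj.mp hI
  rw [hI']
  have h1' : Real.log Z2 ≥ 0 := Real.log_nonneg hZ21
  have h2' : Real.log Z1 ≤ Real.log (s₁ / (s₁ - 1)) :=
    Real.log_le_log (by linarith) hZ1le
  linarith

/-- The Korobov–Vinogradov/Ford hypothesis with constants `A`, `a`, `t₀`:
a zero-free region inside the critical strip together with bounds on
`ζ′/ζ`, `1/ζ` there, and a bound on `ζ` in the right half of the critical strip. -/
def KV (A a t₀ : ℝ) : Prop :=
  0 < A ∧ 0 < a ∧ a ≤ 1 ∧ 16 < t₀ ∧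
  (∀ t σ : ℝ, t₀ ≤ t →
      1 - a / ((Real.log t) ^ ((2 : ℝ)/3) * (Real.log (Real.log t)) ^ ((1 : ℝ)/3)) ≤ σ →
      riemannZeta (σ + t * Complex.I) ≠ 0 ∧
      ‖deriv riemannZeta (σ + t * Complex.I) / riemannZeta (σ + t * Complex.I)‖ ≤
        A * (Real.log t) ^ ((2 : ℝ)/3) * (Real.log (Real.log t)) ^ ((1 : ℝ)/3) ∧
      ‖1 / riemannZeta (σ + t * Complex.I)‖ ≤
        A * (Real.log t) ^ ((2 : ℝ)/3) * (Real.log (Real.log t)) ^ ((1 : ℝ)/3)) ∧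
  (∀ t σ : ℝ, t₀ ≤ t → 1/2 ≤ σ → σ ≤ 1 →
      ‖riemannZeta (σ + t * Complex.I)‖ ≤
        A * (Real.log t) ^ ((2 : ℝ)/3) * (1 + t ^ (100 * (1 - σ) ^ ((3 : ℝ)/2))))

/-- Assuming (KV), there exist `C > 0` and `t₁ ≥ t₀` such that for every `t ≥ t₁`,
`|∫_1^2 ζ′(σ+it)/ζ(σ+it) dσ| ≤ (2/3)·log log t + C·log log log t`. -/
theorem arg_zeta_bound (A a t₀ : ℝ) (hKV : KV A a t₀) :
    ∃ C > 0, ∃ t₁ ≥ t₀, ∀ t ≥ t₁,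
      ‖∫ σ in (1:ℝ)..2,
          deriv riemannZeta (σ + t * Complex.I) / riemannZeta (σ + t * Complex.I)‖ ≤
        2/3 * Real.log (Real.log t) + C * Real.log (Real.log (Real.log t)) := by
  obtain ⟨hA, ha, ha1, ht₀, hmain, -⟩ := hKV
  refine ⟨A + Real.log 2 + 1/3, by positivity, max t₀ (Real.exp (Real.exp (Real.exp 1))),
    le_max_left _ _, fun t ht => ?_⟩
  -- basic facts about t
  have ht0 : t₀ ≤ t := le_trans (le_max_left _ _) ht
  have hte : Real.exp (Real.exp (Real.exp 1)) ≤ t := le_trans (le_max_right _ _) ht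
  have htpos : (0:ℝ) < t := lt_of_lt_of_le (Real.exp_pos _) hte
  have hlt : Real.exp (Real.exp 1) ≤ Real.log t :=
    (Real.le_log_iff_exp_le htpos).mpr hte
  have hltpos : (0:ℝ) < Real.log t := lt_of_lt_of_le (Real.exp_pos _) hlt
  have hllt : Real.exp 1 ≤ Real.log (Real.log t) :=
    (Real.le_log_iff_exp_le hltpos).mpr hlt
  have hlltpos : (0:ℝ) < Real.log (Real.log t) := lt_of_lt_of_le (Real.exp_pos _) hllt
  have hlllt : (1:ℝ) ≤ Real.log (Real.log (Real.log t)) := by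
    have := (Real.le_log_iff_exp_le hlltpos).mpr hllt
    simpa using this
  have hlt1 : (1:ℝ) ≤ Real.log t := le_trans (by
      calc (1:ℝ) ≤ Real.exp (Real.exp 1) := (Real.one_le_exp_iff).mpr (Real.exp_pos 1).le
      ) hlt
  have hllt1 : (1:ℝ) ≤ Real.log (Real.log t) :=
    le_trans (Real.one_le_exp_iff.mpr zero_le_one) hllt
  set lg := Real.log t with hlg
  set llg := Real.log (Real.log t) with hllg
  set L := lg ^ ((2:ℝ)/3) * llg ^ ((1:ℝ)/3) with hL
  have hL1 : (1:ℝ) ≤ L := by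
    have h1 : (1:ℝ) ≤ lg ^ ((2:ℝ)/3) := by
      calc (1:ℝ) = 1 ^ ((2:ℝ)/3) := (Real.one_rpow _).symm
      _ ≤ lg ^ ((2:ℝ)/3) := Real.rpow_le_rpow zero_le_one hlt1 (by norm_num)
    have h2 : (1:ℝ) ≤ llg ^ ((1:ℝ)/3) := by
      calc (1:ℝ) = 1 ^ ((1:ℝ)/3) := (Real.one_rpow _).symm
      _ ≤ llg ^ ((1:ℝ)/3) := Real.rpow_le_rpow zero_le_one hllt1 (by norm_num)
    calc (1:ℝ) = 1 * 1 := by norm_num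
    _ ≤ lg ^ ((2:ℝ)/3) * llg ^ ((1:ℝ)/3) := mul_le_mul h1 h2 zero_le_one (by linarith)
  have hL0 : (0:ℝ) < L := lt_of_lt_of_le zero_lt_one hL1
  set s₁ : ℝ := 1 + 1/L with hs₁
  have h1 : 1 < s₁ := by
    have : (0:ℝ) < 1/L := by positivity
    simp only [hs₁]; linarith
  have h2 : s₁ ≤ 2 := by
    have : 1/L ≤ 1 := by
      rw [div_le_one hL0]; exact hL1
    simp only [hs₁]; linarith
  have htne : t ≠ 0 := ne_of_gt htpos
  -- the integrand and its continuity on [1,2]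
  set f : ℝ → ℂ := fun σ =>
    deriv riemannZeta (σ + t * Complex.I) / riemannZeta (σ + t * Complex.I) with hf
  have hne1 : ∀ x : ℝ, ((x:ℂ) + t * Complex.I) ≠ 1 := by
    intro x h
    have : ((x:ℂ) + t * Complex.I).im = (1:ℂ).im := by rw [h]
    simp at this
    exact absurd this (by intro h'; rw [h'] at htpos; exact lt_irrefl 0 htpos)
  have hzne : ∀ x : ℝ, 1 ≤ x → riemannZeta ((x:ℂ) + t * Complex.I) ≠ 0 := by
    intro x hx
    have haL : 0 < a / L := by positivity
    exact (hmain t x ht0 (by rw [← hlg, ← hllg, ← hL]; linarith)).1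
  have hcont : ContinuousOn f (Set.Icc 1 2) := by
    intro x hx
    apply ContinuousAt.continuousWithinAt
    have hc : ContinuousAt (fun x : ℝ => (x:ℂ) + t * Complex.I) x :=
      (Complex.continuous_ofReal.add continuous_const).continuousAt
    have hd : ContinuousAt (fun y : ℝ => deriv riemannZeta ((y:ℂ) + t * Complex.I)) x :=
      ContinuousAt.comp (g := deriv riemannZeta)
        (f := fun y : ℝ => (y:ℂ) + (t:ℂ) * Complex.I)
        ((analyticAt_deriv_zeta (hne1 x)).continuousAt) hc
    have hz : ContinuousAt (fun y : ℝ => riemannZeta ((y:ℂ) + t * Complex.I)) x :=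
      ContinuousAt.comp (g := riemannZeta)
        (f := fun y : ℝ => (y:ℂ) + (t:ℂ) * Complex.I)
        ((differentiableAt_riemannZeta (hne1 x)).continuousAt) hc
    exact hd.div hz (hzne x hx.1)
  have hint : IntervalIntegrable f MeasureTheory.volume 1 2 := by
    apply ContinuousOn.intervalIntegrable
    rwa [Set.uIcc_of_le (by norm_num : (1:ℝ) ≤ 2)]
  have hintA : IntervalIntegrable f MeasureTheory.volume 1 s₁ :=
    hint.mono_set (by rw [Set.uIcc_of_le (by norm_num : (1:ℝ) ≤ 2),
      Set.uIcc_of_le h1.le]; exact Set.Icc_subset_Icc le_rfl h2)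
  have hintB : IntervalIntegrable f MeasureTheory.volume s₁ 2 :=
    hint.mono_set (by rw [Set.uIcc_of_le (by norm_num : (1:ℝ) ≤ 2),
      Set.uIcc_of_le h2]; exact Set.Icc_subset_Icc h1.le le_rfl)
  -- split the integral
  rw [← intervalIntegral.integral_add_adjacent_intervals hintA hintB]
  -- part 1 bound
  have hpart1 : ‖∫ σ in (1:ℝ)..s₁, f σ‖ ≤ A := by
    have hb : ∀ x ∈ Set.uIoc (1:ℝ) s₁, ‖f x‖ ≤ A * L := by
      intro x hx
      rw [Set.uIoc_of_le h1.le] at hx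
      have := (hmain t x ht0 (by
        rw [← hlg, ← hllg, ← hL]
        have haL : 0 < a / L := by positivity
        linarith [hx.1.le])).2.1
      rw [← hlg, ← hllg] at this
      calc ‖f x‖ = ‖f x‖ := rfl
      _ ≤ A * lg ^ ((2:ℝ)/3) * llg ^ ((1:ℝ)/3) := this
      _ = A * L := by rw [hL]; ring
    calc ‖∫ σ in (1:ℝ)..s₁, f σ‖ ≤ A * L * |s₁ - 1| :=
        intervalIntegral.norm_integral_le_of_norm_le_const hb
    _ = A * L * (1/L) := by
        rw [show s₁ - 1 = 1/L by rw [hs₁]; ring, abs_of_pos (by positivity)]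
    _ = A := by field_simp
  -- part 2 bound
  have hpart2 : ‖∫ σ in s₁..2, f σ‖ ≤ Real.log 2 + Real.log L := by
    have hmaj : ∀ᵐ x ∂(MeasureTheory.volume.restrict (Set.uIoc s₁ 2)),
        ‖f x‖ ≤ ‖deriv riemannZeta (x : ℂ) / riemannZeta (x : ℂ)‖ := by
      rw [Set.uIoc_of_le h2]
      refine (MeasureTheory.ae_restrict_iff' measurableSet_Ioc).mpr
        (MeasureTheory.ae_of_all _ fun x hx => ?_)
      exact logDeriv_zeta_norm_le (lt_trans h1 hx.1)
    have hgint : IntervalIntegrable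
        (fun x : ℝ => ‖deriv riemannZeta (x : ℂ) / riemannZeta (x : ℂ)‖)
        MeasureTheory.volume s₁ 2 :=
      ((continuousOn_logDeriv_zeta_real h1 h2).norm).intervalIntegrable
    calc ‖∫ σ in s₁..2, f σ‖
        ≤ |∫ x in s₁..2, ‖deriv riemannZeta (x : ℂ) / riemannZeta (x : ℂ)‖| :=
          le_trans (intervalIntegral.norm_integral_le_of_norm_le h2 (by
            rw [← MeasureTheory.ae_restrict_iff' measurableSet_Ioc, ← Set.uIoc_of_le h2]; exact hmaj)
            hgint) (le_abs_self _)
      _ = ∫ x in s₁..2, ‖deriv riemannZeta (x : ℂ) / riemannZeta (x : ℂ)‖ :=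
          _root_.abs_of_nonneg (intervalIntegral.integral_nonneg h2 fun u hu => norm_nonneg _)
      _ ≤ Real.log (s₁ / (s₁ - 1)) := integral_majorant_le h1 h2
      _ ≤ Real.log (2 * L) := by
          rw [show s₁ - 1 = 1/L by rw [hs₁]; ring, hs₁]
          apply Real.log_le_log (by positivity)
          have hinv : 1/L ≤ 1 := by rw [div_le_one hL0]; exact hL1
          rw [div_le_iff₀ (by positivity : (0:ℝ) < 1/L)]
          have h2L : 2*L*(1/L) = 2 := by field_simp
          rw [h2L]; linarith
      _ = Real.log 2 + Real.log L := Real.log_mul two_ne_zero (ne_of_gt hL0)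
  -- log L
  have hlogL : Real.log L = 2/3 * llg + 1/3 * Real.log llg := by
    rw [hL, Real.log_mul (by positivity) (by positivity),
      Real.log_rpow hltpos, Real.log_rpow hlltpos]
    try rw [← hllg]
    try ring
  calc ‖(∫ σ in (1:ℝ)..s₁, f σ) + ∫ σ in s₁..2, f σ‖
      ≤ ‖∫ σ in (1:ℝ)..s₁, f σ‖ + ‖∫ σ in s₁..2, f σ‖ := norm_add_le _ _
    _ ≤ A + (Real.log 2 + Real.log L) := add_le_add hpart1 hpart2
    _ = A + Real.log 2 + 2/3 * llg + 1/3 * Real.log llg := by rw [hlogL]; ring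
    _ ≤ 2/3 * llg + (A + Real.log 2 + 1/3) * Real.log llg := by
        have hl2 : (0:ℝ) ≤ Real.log 2 := Real.log_nonneg one_le_two
        nlinarith [hlllt, hA.le]
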